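/- Let G be a finite group, g ∈ G, and let N = ⋂_{χ ∈ Irr(G), χ(g)=χ(1)} ker χ. Then K_g = N°, where K_g = {h ∈ G : E_h = E_g} with E_x = {χ ∈ Irr(G) : χ(x) ≠ χ(1)}, and N° = N \ ⋃{M : M normal in G, M < N} M. -/

import Mathlib

/-- `χ : G → ℂ` is an irreducible character: the character of a simple
finite-dimensional complex representation of `G`. -/
def IsIrrChar (G : Type) [Monoid G] (χ : G → ℂ) : Prop :=
  ∃ V : FDRep ℂ G, CategoryTheory.Simple V ∧ V.character = χ

/-- `E_g = {χ ∈ Irr(G) : χ(g) ≠ χ(1)}`. -/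
def Eset (G : Type) [Monoid G] (g : G) : Set (G → ℂ) :=
  {χ : G → ℂ | IsIrrChar G χ ∧ χ g ≠ χ 1}

/-- `K_g = {h ∈ G : E_h = E_g}`. -/
def Kset (G : Type) [Monoid G] (g : G) : Set G :=
  {h : G | Eset G h = Eset G g}

open CategoryTheory Polynomial

set_option linter.unusedSectionVars false
set_option maxHeartbeats 1000000


lemma charpoly_root_hasEigenvalue {V : Type} [AddCommGroup V] [Module ℂ V]
    [FiniteDimensional ℂ V] (f : Module.End ℂ V) {μ : ℂ}
    (h : f.charpoly.IsRoot μ) : f.HasEigenvalue μ := by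
  classical
  let b := Module.finBasis ℂ V
  set M := LinearMap.toMatrix b b f with hM
  have hch : M.charpoly = f.charpoly := LinearMap.charpoly_toMatrix f b
  have heval : (M.charpoly).eval μ = 0 := by rw [hch]; exact h
  have hmap : (Matrix.charmatrix M).map (evalRingHom μ) = Matrix.diagonal (fun _ => μ) - M := by
    ext i j
    by_cases hij : i = j
    · subst hij
      simp [Matrix.charmatrix_apply_eq, Matrix.map_apply]
    · simp [Matrix.charmatrix_apply_ne _ _ _ hij, Matrix.map_apply, Matrix.diagonal_apply_ne _ hij]
  have hdet : (Matrix.diagonal (fun _ => μ) - M).det = 0 := by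
    rw [← hmap]
    have := (RingHom.map_det (evalRingHom μ) (Matrix.charmatrix M)).symm
    rw [RingHom.mapMatrix_apply] at this
    rw [this]
    simpa [Matrix.charpoly] using heval
  obtain ⟨v, hv0, hv⟩ := Matrix.exists_mulVec_eq_zero_iff.2 hdet
  have hMv : M.mulVec v = μ • v := by
    have h2 := hv
    rw [Matrix.sub_mulVec, sub_eq_zero] at h2
    rw [← h2]
    ext i
    simp [Matrix.mulVec_diagonal]
  -- transfer to f
  set w := b.equivFun.symm v with hw
  have hw0 : w ≠ 0 := by
    rw [hw, ne_eq, LinearEquiv.map_eq_zero_iff]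
    exact hv0
  have hfw : f w = μ • w := by
    have hrepr : ⇑(b.repr w) = v := by
      ext i
      rw [← b.equivFun_apply, hw, LinearEquiv.apply_symm_apply]
    have : f w = b.equivFun.symm (M.mulVec v) := by
      conv_lhs => rw [← Matrix.toLin_toMatrix b b f]
      rw [Matrix.toLin_apply, hrepr, Module.Basis.equivFun_symm_apply]
    rw [this, hMv, map_smul]
  exact Module.End.hasEigenvalue_of_hasEigenvector ⟨Module.End.mem_eigenspace_iff.2 hfw, hw0⟩

lemma end_eq_one_of_trace {V : Type} [AddCommGroup V] [Module ℂ V] [FiniteDimensional ℂ V]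
    (f : Module.End ℂ V) {n : ℕ} (hn : 0 < n) (hfn : f ^ n = 1)
    (htr : LinearMap.trace ℂ V f = (Module.finrank ℂ V : ℂ)) : f = 1 := by
  classical
  cases subsingleton_or_nontrivial V with
  | inl h => exact Subsingleton.elim _ _
  | inr hV =>
  have hint : IsIntegral ℂ f := Algebra.IsIntegral.isIntegral f
  have hdvd : minpoly ℂ f ∣ X ^ n - C 1 := by
    apply minpoly.dvd
    simp [hfn]
  have hsep : (X ^ n - C (1:ℂ)).Separable :=
    separable_X_pow_sub_C 1 (by exact_mod_cast Nat.cast_ne_zero.2 hn.ne') one_ne_zero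
  have hmsep : (minpoly ℂ f).Separable := hsep.of_dvd hdvd
  have hroot_pow : ∀ μ ∈ f.charpoly.roots, μ ^ n = 1 := by
    intro μ hμ
    have hev : f.HasEigenvalue μ :=
      charpoly_root_hasEigenvalue f (isRoot_of_mem_roots hμ)
    have hmr : (minpoly ℂ f).IsRoot μ := Module.End.isRoot_of_hasEigenvalue hev
    obtain ⟨q, hq⟩ := hdvd
    have : (X ^ n - C (1:ℂ)).IsRoot μ := by
      rw [hq]
      simp [IsRoot, hmr.eq_zero]
    simpa [IsRoot, sub_eq_zero] using this
  have habs : ∀ μ ∈ f.charpoly.roots, ‖μ‖ = 1 := by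
    intro μ hμ
    have h1 : ‖μ‖ ^ n = 1 := by
      rw [← norm_pow, hroot_pow μ hμ, norm_one]
    rcases lt_trichotomy (‖μ‖) 1 with h2 | h2 | h2
    · exact absurd h1 (by simpa using (pow_lt_one₀ (norm_nonneg μ) h2 hn.ne').ne)
    · exact h2
    · exact absurd h1 (by simpa using (one_lt_pow₀ h2 hn.ne').ne')
  have hsplits := IsAlgClosed.splits f.charpoly
  have hchne : f.charpoly ≠ 0 := f.charpoly_monic.ne_zero
  have hcard : (Multiset.card f.charpoly.roots : ℕ) = Module.finrank ℂ V := by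
    rw [← f.charpoly_natDegree]
    exact splits_iff_card_roots.mp hsplits
  have htrace_sum : f.charpoly.roots.sum = (Module.finrank ℂ V : ℂ) := by
    have hb : LinearMap.trace ℂ V f = f.charpoly.roots.sum := by
      let b := Module.finBasis ℂ V
      rw [LinearMap.trace_eq_matrix_trace ℂ b f, ← LinearMap.charpoly_toMatrix f b]
      exact Matrix.trace_eq_sum_roots_charpoly _
    rw [← hb, htr]
  -- each root equals 1
  have hall : ∀ μ ∈ f.charpoly.roots, μ = 1 := by
    by_contra hcon
    push_neg at hcon
    obtain ⟨μ0, hμ0m, hμ0⟩ := hcon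
    have hre_le : ∀ μ ∈ f.charpoly.roots, μ.re ≤ 1 := fun μ hμ =>
      (Complex.re_le_norm μ).trans (habs μ hμ).le
    have hre0 : μ0.re < 1 := by
      rcases lt_or_eq_of_le (hre_le μ0 hμ0m) with h2 | h2
      · exact h2
      · exfalso
        apply hμ0
        have hab := habs μ0 hμ0m
        have him : μ0.im = 0 := by
          have := Complex.sq_norm μ0
          rw [hab] at this
          simp [Complex.normSq_apply, h2] at this
          nlinarith [this]
        apply Complex.ext <;> simp [h2, him]
    -- strict inequality on sums of real parts
    have hsum_re : (f.charpoly.roots.map Complex.re).sum = (Module.finrank ℂ V : ℝ) := by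
      have h3 : (f.charpoly.roots.map Complex.re).sum = (f.charpoly.roots.sum).re := by
        simpa using (map_multiset_sum Complex.reAddGroupHom f.charpoly.roots).symm
      rw [h3, htrace_sum]
      simp
    have hrest := Multiset.cons_erase hμ0m
    have hsum_lt : (f.charpoly.roots.map Complex.re).sum < (Multiset.card f.charpoly.roots : ℝ) := by
      rw [← hrest]
      simp only [Multiset.map_cons, Multiset.sum_cons, Multiset.card_cons]
      have hle : ((f.charpoly.roots.erase μ0).map Complex.re).sum ≤
          (Multiset.card (f.charpoly.roots.erase μ0) : ℝ) := by
        have := Multiset.sum_le_card_nsmul ((f.charpoly.roots.erase μ0).map Complex.re) 1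
          (by
            intro x hx
            obtain ⟨μ, hμ, rfl⟩ := Multiset.mem_map.1 hx
            exact hre_le μ (Multiset.mem_of_mem_erase hμ))
        simpa [Multiset.card_map] using this
      push_cast
      linarith
    rw [hsum_re, hcard] at hsum_lt
    exact lt_irrefl _ hsum_lt
  -- minpoly = X - 1
  have hmroots : ∀ μ ∈ (minpoly ℂ f).roots, μ = 1 := by
    intro μ hμ
    exact hall μ (Multiset.mem_of_le
      (Polynomial.roots.le_of_dvd hchne (LinearMap.minpoly_dvd_charpoly f)) hμ)
  have hmmonic : (minpoly ℂ f).Monic := minpoly.monic hint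
  have hmsplit : Splits (minpoly ℂ f) := IsAlgClosed.splits _
  have hmeq : minpoly ℂ f = (X - C 1) ^ Multiset.card (minpoly ℂ f).roots := by
    have hmapc : (minpoly ℂ f).roots.map (fun a => X - C a) =
        (minpoly ℂ f).roots.map (fun _ => X - C (1:ℂ)) :=
      Multiset.map_congr rfl (fun μ hμ => by rw [hmroots μ hμ])
    conv_lhs => rw [hmsplit.eq_prod_roots_of_monic hmmonic]
    rw [hmapc]
    simp [Multiset.map_const', Multiset.prod_replicate]
  have hkone : Multiset.card (minpoly ℂ f).roots = 1 := by
    have hdeg : 0 < (minpoly ℂ f).natDegree := minpoly.natDegree_pos hint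
    have hk : Multiset.card (minpoly ℂ f).roots = (minpoly ℂ f).natDegree :=
      splits_iff_card_roots.mp hmsplit
    by_contra hne
    have h2 : 2 ≤ Multiset.card (minpoly ℂ f).roots := by omega
    have : (X - C (1:ℂ)) * (X - C 1) ∣ minpoly ℂ f := by
      rw [hmeq, ← pow_two]
      exact pow_dvd_pow _ h2
    exact Polynomial.not_isUnit_X_sub_C 1 (hmsep.squarefree _ this)
  have hmin : minpoly ℂ f = X - C 1 := by rw [hmeq, hkone, pow_one]
  have := minpoly.aeval ℂ f
  rw [hmin] at this
  simp only [map_sub, aeval_X, aeval_C] at this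
  rw [sub_eq_zero] at this
  rw [this]
  simp [Algebra.algebraMap_eq_smul_one]

lemma char_eq_one_iff {G : Type} [Group G] [Fintype G] (V : FDRep ℂ G) (x : G) :
    V.character x = V.character 1 ↔ V.ρ x = 1 := by
  constructor
  · intro h
    apply end_eq_one_of_trace (V.ρ x) (orderOf_pos x)
    · rw [← map_pow, pow_orderOf_eq_one, map_one]
    · have h1 : V.character 1 = (Module.finrank ℂ V : ℂ) := by
        simpa using V.char_one
      rw [← h1, ← h]
      rfl
  · intro h
    show LinearMap.trace ℂ V (V.ρ x) = LinearMap.trace ℂ V (V.ρ 1)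
    rw [h, map_one V.ρ]


/-- The kernel of a representation, as a subgroup. -/
def repKer {G : Type} [Group G] (V : FDRep ℂ G) : Subgroup G where
  carrier := {x | V.ρ x = 1}
  one_mem' := by simp
  mul_mem' := by
    intro a b ha hb
    simp only [Set.mem_setOf_eq] at *
    rw [map_mul, ha, hb, one_mul]
  inv_mem' := by
    intro a ha
    simp only [Set.mem_setOf_eq] at *
    have : V.ρ a⁻¹ * V.ρ a = 1 := by rw [← map_mul, inv_mul_cancel, map_one]
    rw [ha, mul_one] at this
    exact this

lemma repKer_normal {G : Type} [Group G] (V : FDRep ℂ G) : (repKer V).Normal := by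
  constructor
  intro a ha g
  have : V.ρ (g * a * g⁻¹) = V.ρ g * V.ρ a * V.ρ g⁻¹ := by rw [map_mul, map_mul]
  simp only [repKer, Subgroup.mem_mk, Set.mem_setOf_eq] at *
  change V.ρ a = 1 at ha
  show V.ρ (g * a * g⁻¹) = 1
  rw [this, ha, mul_one, ← map_mul, mul_inv_cancel, map_one]

lemma mem_repKer {G : Type} [Group G] [Fintype G] (V : FDRep ℂ G) (x : G) :
    x ∈ repKer V ↔ V.ρ x = 1 := Iff.rfl

noncomputable def resRep {G : Type} [Monoid G] {V : Type} [AddCommGroup V] [Module ℂ V]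
    (ρ : Representation ℂ G V) (p : Submodule ℂ V)
    (hp : ∀ g : G, ∀ v ∈ p, ρ g v ∈ p) : Representation ℂ G p where
  toFun g := (ρ g).restrict (fun v hv => hp g v hv)
  map_one' := by
    ext v
    simp [LinearMap.restrict_apply]
  map_mul' g h := by
    ext v
    simp [LinearMap.restrict_apply]

lemma resRep_apply {G : Type} [Monoid G] {V : Type} [AddCommGroup V] [Module ℂ V]
    (ρ : Representation ℂ G V) (p : Submodule ℂ V)
    (hp : ∀ g : G, ∀ v ∈ p, ρ g v ∈ p) (g : G) (v : p) :
    (resRep ρ p hp g v : V) = ρ g (v : V) := rfl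


def IsIrrF {G : Type} [Monoid G] (V : FDRep ℂ G) : Prop :=
  Nontrivial V ∧ ∀ p : Submodule ℂ V, (∀ g : G, ∀ v ∈ p, V.ρ g v ∈ p) → p = ⊥ ∨ p = ⊤


lemma simple_of_isIrrF {G : Type} [Monoid G] (V : FDRep ℂ G) (h : IsIrrF V) : Simple V := by
  obtain ⟨hnt, hs⟩ := h
  constructor
  intro Y f hf
  constructor
  · intro hiso h0
    have h1 : (𝟙 V : V ⟶ V) = 0 := by
      obtain ⟨g', _, hg2⟩ := hiso.out
      rw [h0, Limits.comp_zero] at hg2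
      exact hg2.symm
    obtain ⟨v, w, hvw⟩ := hnt
    apply hvw
    have hv := congrArg (fun (t : V ⟶ V) => t.hom v) h1
    have hw := congrArg (fun (t : V ⟶ V) => t.hom w) h1
    simp only [Action.id_hom, Action.zero_hom] at hv hw
    change v = (0 : V →ₗ[ℂ] V) v at hv
    change w = (0 : V →ₗ[ℂ] V) w at hw
    simp at hv hw
    rw [hv, hw]
  · intro h0
    -- kernel is trivial
    have hker : LinearMap.ker f.hom.hom.hom = ⊥ := by
      set q := LinearMap.ker f.hom.hom.hom with hq
      have hqinv : ∀ g : G, ∀ v ∈ q, Y.ρ g v ∈ q := by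
        intro g v hv
        have hc := congrArg (fun (t : Y.V ⟶ V.V) => t v) (f.comm g)
        simp only [hq, LinearMap.mem_ker] at hv ⊢
        change f.hom.hom.hom (Y.ρ g v) = 0
        have : f.hom.hom.hom (Y.ρ g v) = V.ρ g (f.hom.hom.hom v) := hc
        rw [this, hv, map_zero]
      -- the inclusion of the kernel composed with f is zero
      let K : FDRep ℂ G := FDRep.of (resRep Y.ρ q hqinv)
      let ι : K ⟶ Y := ⟨FGModuleCat.ofHom q.subtype, by
        intro g
        ext v
        rfl⟩
      have hcomp : ι ≫ f = 0 := by
        apply Action.hom_ext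
        ext v
        change f.hom.hom.hom (q.subtype v) = 0
        exact v.2
      have : ι = 0 := Limits.zero_of_comp_mono f hcomp
      rw [Submodule.eq_bot_iff]
      intro v hv
      have := congrArg (fun (t : K ⟶ Y) => t.hom ⟨v, hv⟩) this
      exact this
    have hrange : LinearMap.range f.hom.hom.hom = ⊤ := by
      have hinv : ∀ g : G, ∀ v ∈ LinearMap.range f.hom.hom.hom,
          V.ρ g v ∈ LinearMap.range f.hom.hom.hom := by
        rintro g v ⟨w, rfl⟩
        have hc := congrArg (fun (t : Y.V ⟶ V.V) => t w) (f.comm g)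
        exact ⟨Y.ρ g w, by exact hc⟩
      rcases hs (LinearMap.range f.hom.hom.hom) hinv with hb | ht
      · exfalso
        apply h0
        apply Action.hom_ext
        ext v
        have : f.hom.hom.hom v ∈ LinearMap.range f.hom.hom.hom :=
          LinearMap.mem_range_self _ v
        rw [hb] at this
        simpa [Action.zero_hom] using this
      · exact ht
    -- build the inverse
    have hbij : Function.Bijective f.hom.hom.hom :=
      ⟨LinearMap.ker_eq_bot.1 hker, LinearMap.range_eq_top.1 hrange⟩
    let e : Y ≃ₗ[ℂ] V := LinearEquiv.ofBijective _ hbij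
    let ginv : V ⟶ Y := ⟨FGModuleCat.ofHom (e.symm : V →ₗ[ℂ] Y), by
      intro g
      ext v
      change e.symm (V.ρ g v) = Y.ρ g (e.symm v)
      apply e.injective
      have hc := congrArg (fun (t : Y.V ⟶ V.V) => t (e.symm v)) (f.comm g)
      have h1 : e (Y.ρ g (e.symm v)) = V.ρ g (e (e.symm v)) := hc
      rw [h1]
      simp [e]⟩
    refine ⟨⟨ginv, ?_, ?_⟩⟩
    · apply Action.hom_ext
      ext v
      change e.symm (e v) = v
      simp
    · apply Action.hom_ext
      ext v
      change e (e.symm v) = v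
      simp

/-- The left regular representation on the monoid algebra. -/
noncomputable def regRep (H : Type) [Monoid H] : Representation ℂ H (MonoidAlgebra ℂ H) where
  toFun g := LinearMap.mulLeft ℂ (MonoidAlgebra.of ℂ H g)
  map_one' := by
    ext v
    simp
  map_mul' g h := by
    ext v
    simp [mul_assoc]

lemma exists_irrF_not_fixed {H : Type} [Group H] [Fintype H] (x : H) (hx : x ≠ 1) :
    ∃ V : FDRep ℂ H, IsIrrF V ∧ V.ρ x ≠ 1 := by
  classical
  haveI : NeZero ((Fintype.card H : ℂ)) := ⟨by exact_mod_cast Fintype.card_ne_zero⟩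
  set R := MonoidAlgebra ℂ H with hR
  haveI : FiniteDimensional ℂ R :=
    Module.Finite.equiv ((Finsupp.linearEquivFunOnFinite ℂ ℂ H).symm.trans (MonoidAlgebra.coeffLinearEquiv ℂ).symm)
  by_contra hcon
  push_neg at hcon
  -- every element of every simple submodule of R is fixed by left mult by `of x`
  have claim : ∀ p : Submodule R R, IsSimpleModule R p →
      ∀ v ∈ p, MonoidAlgebra.of ℂ H x * v = v := by
    intro p hsimp v hv
    haveI := hsimp
    set p' : Submodule ℂ R := p.restrictScalars ℂ with hp'def
    have hp' : ∀ g : H, ∀ v ∈ p', regRep H g v ∈ p' := by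
      intro g v hv
      have : regRep H g v = MonoidAlgebra.of ℂ H g • v := by
        rw [smul_eq_mul]; rfl
      rw [this]
      exact p.smul_mem _ hv
    haveI : FiniteDimensional ℂ p' := inferInstance
    set V : FDRep ℂ H := FDRep.of (resRep (regRep H) p' hp') with hVdef
    have hirr : IsIrrF V := by
      constructor
      · -- Nontrivial
        have : Nontrivial p := IsSimpleModule.nontrivial R p
        exact this
      · intro q hq
        -- promote q to an R-submodule of p
        let q' : Submodule R p :=
          { carrier := SetLike.coe q,
            add_mem' := fun ha hb => q.add_mem ha hb,
            zero_mem' := q.zero_mem,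
            smul_mem' := by
              intro r v hv
              induction r using MonoidAlgebra.induction_on with
              | of g =>
                have : (MonoidAlgebra.of ℂ H g) • v = V.ρ g v := by
                  apply Subtype.ext
                  show (MonoidAlgebra.of ℂ H g) • (v : R) = _
                  rw [smul_eq_mul]
                  rfl
                rw [this]
                exact hq g v hv
              | add f g hf hg =>
                rw [add_smul]
                exact q.add_mem hf hg
              | smul c f hf =>
                rw [smul_assoc]
                exact q.smul_mem c hf }
        rcases eq_bot_or_eq_top q' with hb | ht
        · left
          rw [Submodule.eq_bot_iff]
          intro v hvq
          have : v ∈ q' := hvq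
          rw [hb] at this
          exact (Submodule.mem_bot R).1 this
        · right
          rw [Submodule.eq_top_iff']
          intro v
          have : v ∈ q' := by rw [ht]; trivial
          exact this
    have h1 := hcon V hirr
    have h2 := congrArg (fun (t : p' →ₗ[ℂ] p') => (t ⟨v, hv⟩ : R)) h1
    simpa [V, resRep_apply, regRep] using h2
  -- now the sup of simple submodules is everything
  haveI : IsSemisimpleModule R R := inferInstance
  have hsup := IsSemisimpleModule.sSup_simples_eq_top R R
  have hfix : ∀ v : R, MonoidAlgebra.of ℂ H x * v = v := by
    intro v
    have hv : v ∈ sSup {m : Submodule R R | IsSimpleModule R m} := by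
      rw [hsup]; trivial
    rw [sSup_eq_iSup'] at hv
    exact Submodule.iSup_induction (motive := fun w => MonoidAlgebra.of ℂ H x * w = w) _ hv
      (fun i w hw => claim i i.2 w hw)
      (by show MonoidAlgebra.of ℂ H x * 0 = 0; rw [mul_zero])
      (fun a b ha hb => by
        show MonoidAlgebra.of ℂ H x * (a + b) = a + b
        rw [mul_add, ha, hb])
  have h1 := hfix 1
  rw [mul_one] at h1
  have h2 : (MonoidAlgebra.of ℂ H x).coeff x = (1 : R).coeff x := by rw [h1]
  simp [MonoidAlgebra.one_def, MonoidAlgebra.coeff_single_apply, hx] at h2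
  rw [MonoidAlgebra.one_def, MonoidAlgebra.coeff_single, Finsupp.single_apply, if_neg (Ne.symm hx)] at h2
  exact one_ne_zero h2

lemma exists_simple_rep_of_not_mem {G : Type} [Group G] [Fintype G] (M : Subgroup G)
    (hMn : M.Normal) {x : G} (hx : x ∉ M) :
    ∃ V : FDRep ℂ G, Simple V ∧ (∀ m ∈ M, V.ρ m = 1) ∧ V.ρ x ≠ 1 := by
  classical
  haveI := hMn
  haveI : Finite (G ⧸ M) := Quotient.finite _
  haveI : Fintype (G ⧸ M) := Fintype.ofFinite _
  have hx1 : ((x : G ⧸ M)) ≠ 1 := by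
    rw [ne_eq, QuotientGroup.eq_one_iff]
    exact hx
  obtain ⟨W, hWirr, hWx⟩ := exists_irrF_not_fixed ((x : G ⧸ M)) hx1
  set ρ' : Representation ℂ G W := W.ρ.comp (QuotientGroup.mk' M) with hρ'
  refine ⟨FDRep.of ρ', ?_, ?_, ?_⟩
  · apply simple_of_isIrrF
    obtain ⟨hnt, hs⟩ := hWirr
    constructor
    · exact hnt
    · intro p hp
      apply hs p
      intro q v hv
      obtain ⟨g, rfl⟩ := QuotientGroup.mk'_surjective M q
      exact hp g v hv
  · intro m hm
    show ρ' m = 1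
    rw [hρ']
    have : (QuotientGroup.mk' M) m = 1 := (QuotientGroup.eq_one_iff m).2 hm
    show W.ρ ((QuotientGroup.mk' M) m) = 1
    rw [this, map_one]
  · show ρ' x ≠ 1
    exact hWx

section NNsec
variable {G : Type} [Group G] [Fintype G]

noncomputable def NN (h : G) : Subgroup G :=
  ⨅ (V : FDRep ℂ G) (_ : Simple V ∧ V.character h = V.character 1), repKer V

lemma mem_NN {x h : G} :
    x ∈ NN h ↔ ∀ V : FDRep ℂ G, Simple V → V.character h = V.character 1 → V.ρ x = 1 := by
  simp only [NN, Subgroup.mem_iInf, mem_repKer]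
  constructor
  · intro hx V hS hc
    exact hx V ⟨hS, hc⟩
  · intro hx V hc
    exact hx V hc.1 hc.2

lemma NN_normal (h : G) : (NN h).Normal := by
  constructor
  intro a ha g
  rw [mem_NN] at ha ⊢
  intro V hS hc
  have := (repKer_normal V).conj_mem a ((mem_repKer V a).2 (ha V hS hc)) g
  exact (mem_repKer V _).1 this

lemma self_mem_NN (h : G) : h ∈ NN h := by
  rw [mem_NN]
  intro V _ hc
  exact (char_eq_one_iff V h).1 hc

lemma NN_le {M : Subgroup G} (hMn : M.Normal) {h : G} (hh : h ∈ M) : NN h ≤ M := by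
  intro x hx
  by_contra hxM
  obtain ⟨V, hS, hker, hVx⟩ := exists_simple_rep_of_not_mem M hMn hxM
  apply hVx
  apply mem_NN.1 hx V hS
  exact (char_eq_one_iff V h).2 (hker h hh)

lemma coe_NN (h : G) :
    ((NN h : Subgroup G) : Set G) =
      ⋂ χ ∈ {χ : G → ℂ | IsIrrChar G χ ∧ χ h = χ 1}, {y : G | χ y = χ 1} := by
  ext x
  simp only [SetLike.mem_coe, Set.mem_iInter, Set.mem_setOf_eq]
  rw [mem_NN]
  constructor
  · rintro hx χ ⟨⟨V, hS, rfl⟩, hc⟩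
    exact (char_eq_one_iff V x).2 (hx V hS hc)
  · intro hx V hS hc
    exact (char_eq_one_iff V x).1 (hx V.character ⟨⟨V, hS, rfl⟩, hc⟩)

lemma Eset_eq_iff {h g : G} : Eset G h = Eset G g ↔ NN h = NN g := by
  have key : Eset G h = Eset G g ↔
      (∀ χ : G → ℂ, IsIrrChar G χ → (χ h = χ 1 ↔ χ g = χ 1)) := by
    constructor
    · intro he χ hχ
      constructor
      · intro hc
        by_contra hc'
        have : χ ∈ Eset G g := ⟨hχ, hc'⟩
        rw [← he] at this
        exact this.2 hc
      · intro hc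
        by_contra hc'
        have : χ ∈ Eset G h := ⟨hχ, hc'⟩
        rw [he] at this
        exact this.2 hc
    · intro hiff
      ext χ
      constructor
      · rintro ⟨hχ, hc⟩
        exact ⟨hχ, fun hc' => hc (((hiff χ hχ)).2 hc')⟩
      · rintro ⟨hχ, hc⟩
        exact ⟨hχ, fun hc' => hc (((hiff χ hχ)).1 hc')⟩
  rw [key]
  constructor
  · intro hiff
    apply le_antisymm
    · intro x hx
      rw [mem_NN] at hx ⊢
      intro V hS hc
      exact hx V hS ((hiff V.character ⟨V, hS, rfl⟩).2 hc)
    · intro x hx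
      rw [mem_NN] at hx ⊢
      intro V hS hc
      exact hx V hS ((hiff V.character ⟨V, hS, rfl⟩).1 hc)
  · rintro heq χ ⟨V, hS, rfl⟩
    constructor
    · intro hc
      have hg : g ∈ NN h := heq ▸ self_mem_NN g
      exact (char_eq_one_iff V g).2 (mem_NN.1 hg V hS hc)
    · intro hc
      have hh : h ∈ NN g := heq ▸ self_mem_NN h
      exact (char_eq_one_iff V h).2 (mem_NN.1 hh V hS hc)


end NNsec

/-- if `N = ⋂_{χ ∈ Irr(G), χ(g)=χ(1)} ker χ`, then `K_g = N°`, where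
`N°` is `N` minus the union of all proper normal subgroups of `G` contained in `N`. -/
theorem Kset_eq_circ {G : Type} [Group G] [Fintype G] (g : G) (N : Subgroup G)
    (hN : (N : Set G) =
      ⋂ χ ∈ {χ : G → ℂ | IsIrrChar G χ ∧ χ g = χ 1}, {h : G | χ h = χ 1}) :
    Kset G g =
      (N : Set G) \
        ⋃ M ∈ {M : Subgroup G | M.Normal ∧ M < N}, (M : Set G) := by
  have hNg : N = NN g := by
    apply SetLike.coe_injective
    rw [hN, coe_NN]
  subst hNg
  ext h
  constructor
  · intro hK
    have hEq : NN h = NN g := Eset_eq_iff.1 hK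
    constructor
    · exact hEq ▸ self_mem_NN h
    · intro hmem
      simp only [Set.mem_iUnion, Set.mem_setOf_eq, SetLike.mem_coe] at hmem
      obtain ⟨M, ⟨hMn, hMlt⟩, hhM⟩ := hmem
      have : NN h ≤ M := NN_le hMn hhM
      rw [hEq] at this
      exact absurd (lt_of_le_of_lt this hMlt) (lt_irrefl _)
  · rintro ⟨hhN, hnot⟩
    show Eset G h = Eset G g
    rw [Eset_eq_iff]
    have hle : NN h ≤ NN g := NN_le (NN_normal g) hhN
    rcases lt_or_eq_of_le hle with hlt | heq
    · exfalso
      apply hnot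
      simp only [Set.mem_iUnion, Set.mem_setOf_eq, SetLike.mem_coe]
      exact ⟨NN h, ⟨NN_normal h, hlt⟩, self_mem_NN h⟩
    · exact heq
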